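/- arXiv:1911.02729 — 2 statements merged into one kernel-verified Lean document; each statement's English description precedes it below -/
import Mathlib

section
/- Let $m: (0,\infty) \to \mathbb{R}$ be differentiable and $f: [0,\infty) \to \mathbb{R}$ be twice differentiable. Suppose $m'(r) + \frac{1}{n-1} m(r)^2 + \frac{1}{2} - f''(r) \le 0$ for all $r \in (0, t]$, and $r^2 m(r) \to 0$ and $r^2 m'(r)$ is integrable near $0$ (with $m(r) - \tfrac{n-1}{r}$ bounded near $0$). Then $m(t) - f'(t) \le \frac{n-1}{t} - \frac{t}{6} - \frac{2}{t^2}\int_0^t s f'(s)\, ds$ for all $t > 0$. -/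
open MeasureTheory

/-- ODE comparison step in the weighted Laplacian comparison on a shrinker:
from the Riccati inequality `m' + m²/(n-1) + 1/2 - f'' ≤ 0` on `(0,t]`,
with boundary behaviour of `m` near `0`, one gets
`m(t) - f'(t) ≤ (n-1)/t - t/6 - (2/t²)∫₀ᵗ s f'(s) ds`. -/
theorem stmt3 (n : ℕ) (hn : 2 ≤ n) (t : ℝ) (ht : 0 < t)
    (m m' f f' f'' : ℝ → ℝ)
    (hm : ∀ r ∈ Set.Ioc (0:ℝ) t, HasDerivAt m (m' r) r)
    (hf : ∀ r ∈ Set.Icc (0:ℝ) t, HasDerivAt f (f' r) r)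
    (hf' : ∀ r ∈ Set.Icc (0:ℝ) t, HasDerivAt f' (f'' r) r)
    (hriccati : ∀ r ∈ Set.Ioc (0:ℝ) t,
      m' r + (m r) ^ 2 / ((n : ℝ) - 1) + 1/2 - f'' r ≤ 0)
    (hlim : Filter.Tendsto (fun r => r ^ 2 * m r)
      (nhdsWithin 0 (Set.Ioi 0)) (nhds 0))
    (hint : IntervalIntegrable (fun r => r ^ 2 * m' r) volume 0 t)
    (hbdd : ∃ Cb, ∀ r ∈ Set.Ioc (0:ℝ) t, |m r - ((n : ℝ) - 1) / r| ≤ Cb)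
    (hint2 : IntervalIntegrable (fun s => s * f' s) volume 0 t) :
    m t - f' t ≤ ((n : ℝ) - 1) / t - t / 6 - 2 / t ^ 2 * ∫ s in (0:ℝ)..t, s * f' s := by
  have hn1 : (1:ℝ) ≤ (n:ℝ) - 1 := by
    have : (2:ℝ) ≤ (n:ℝ) := by exact_mod_cast hn
    linarith
  set c : ℝ := (n:ℝ) - 1 with hc
  have hcpos : (0:ℝ) < c := by linarith
  set φ : ℝ → ℝ := fun r => r^2 * m r - r^2 * f' r +
      2 * (∫ s in (0:ℝ)..r, s * f' s) + r^3/6 - c*r with hφdef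
  have hf'cont : ∀ x ∈ Set.Icc (0:ℝ) t, ContinuousAt f' x := fun x hx => (hf' x hx).continuousAt
  -- derivative of φ on the interior
  have hDeriv : ∀ x ∈ Set.Ioo (0:ℝ) t, HasDerivAt φ
      (x^2 * m' x + 2*x*m x - x^2 * f'' x + x^2/2 - c) x := by
    intro x hx
    have hxI : x ∈ Set.Ioc (0:ℝ) t := ⟨hx.1, hx.2.le⟩
    have hxC : x ∈ Set.Icc (0:ℝ) t := ⟨hx.1.le, hx.2.le⟩
    have h1 : HasDerivAt (fun r => r^2 * m r) (2*x*m x + x^2*m' x) x := by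
      have : HasDerivAt (fun r => r^2 * m r) _ x := (hasDerivAt_pow 2 x).mul (hm x hxI)
      convert this using 1
      push_cast; ring
    have h2 : HasDerivAt (fun r => r^2 * f' r) (2*x*f' x + x^2*f'' x) x := by
      have : HasDerivAt (fun r => r^2 * f' r) _ x := (hasDerivAt_pow 2 x).mul (hf' x hxC)
      convert this using 1
      push_cast; ring
    have h3 : HasDerivAt (fun r => ∫ s in (0:ℝ)..r, s * f' s) (x * f' x) x := by
      apply intervalIntegral.integral_hasDerivAt_right
      · apply hint2.mono_set
        rw [Set.uIcc_of_le hx.1.le, Set.uIcc_of_le ht.le]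
        exact Set.Icc_subset_Icc le_rfl hx.2.le
      · refine ⟨Set.Icc 0 t, Icc_mem_nhds hx.1 hx.2, ?_⟩
        have : ContinuousOn (fun s => s * f' s) (Set.Icc (0:ℝ) t) := fun y hy =>
          (continuousAt_id.mul (hf'cont y hy)).continuousWithinAt
        exact this.aestronglyMeasurable measurableSet_Icc
      · exact continuousAt_id.mul (hf'cont x hxC)
    have h4 : HasDerivAt (fun r : ℝ => r^3/6) (x^2/2) x := by
      have : HasDerivAt (fun r : ℝ => r^3/6) _ x := (hasDerivAt_pow 3 x).div_const 6
      convert this using 1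
      push_cast; ring
    have h5 : HasDerivAt (fun r : ℝ => c*r) c x := by
      simpa using (hasDerivAt_id x).const_mul c
    have : HasDerivAt (fun r => r^2 * m r - r^2 * f' r +
        2 * (∫ s in (0:ℝ)..r, s * f' s) + r^3/6 - c*r) _ x :=
      ((((h1.sub h2).add (h3.const_mul 2)).add h4).sub h5)
    convert this using 1
    ring
  -- sign of the derivative
  have hd0 : ∀ x ∈ Set.Ioo (0:ℝ) t, deriv φ x ≤ 0 := by
    intro x hx
    rw [(hDeriv x hx).deriv]
    have hr := hriccati x ⟨hx.1, hx.2.le⟩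
    have h6 : x^2*m' x + x^2*(m x)^2/c + x^2/2 - x^2*f'' x ≤ 0 := by
      have h := mul_nonpos_of_nonneg_of_nonpos (sq_nonneg x) hr
      have h2 : x^2 * (m' x + (m x)^2/c + 1/2 - f'' x)
          = x^2*m' x + x^2*(m x)^2/c + x^2/2 - x^2*f'' x := by ring
      rw [← h2]; exact h
    have key : 2*x*m x - c ≤ x^2 * (m x)^2 / c := by
      rw [le_div_iff₀ hcpos]
      nlinarith [sq_nonneg (x*m x - c)]
    linarith
  -- continuity of φ on [0, t]
  have hcont : ContinuousOn φ (Set.Icc 0 t) := by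
    have c1 : ContinuousOn (fun r => r^2 * m r) (Set.Icc (0:ℝ) t) := by
      intro x hx
      rcases eq_or_lt_of_le hx.1 with h0 | h0
      · subst h0
        have l1 : Filter.Tendsto (fun r => r^2*m r) (pure (0:ℝ)) (nhds 0) := by
          have h00 : (0:ℝ)^2 * m 0 = 0 := by norm_num
          have := tendsto_pure_nhds (fun r : ℝ => r^2*m r) 0
          simpa [h00] using this
        have l2 : Filter.Tendsto (fun r => r^2*m r)
            (pure (0:ℝ) ⊔ nhdsWithin 0 (Set.Ioi 0)) (nhds 0) :=
          Filter.tendsto_sup.2 ⟨l1, hlim⟩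
        have hle : nhdsWithin (0:ℝ) (Set.Icc 0 t) ≤ pure 0 ⊔ nhdsWithin 0 (Set.Ioi 0) := by
          rw [← nhdsWithin_insert, Set.insert_eq]
          have : Set.Icc (0:ℝ) t ⊆ {0} ∪ Set.Ioi 0 := by
            intro y hy
            rcases eq_or_lt_of_le hy.1 with h | h
            · exact Or.inl (by simp [← h])
            · exact Or.inr h
          exact nhdsWithin_mono _ this
        have : Filter.Tendsto (fun r => r^2*m r) (nhdsWithin (0:ℝ) (Set.Icc 0 t)) (nhds 0) :=
          l2.mono_left hle
        have h00 : (fun r : ℝ => r^2*m r) 0 = 0 := by simp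
        unfold ContinuousWithinAt
        rw [h00]
        exact this
      · exact (((continuous_pow 2).continuousAt).mul
          (hm x ⟨h0, hx.2⟩).continuousAt).continuousWithinAt
    have c2 : ContinuousOn (fun r => r^2 * f' r) (Set.Icc (0:ℝ) t) := fun x hx =>
      (((continuous_pow 2).continuousAt).mul (hf'cont x hx)).continuousWithinAt
    have c3 : ContinuousOn (fun r => ∫ s in (0:ℝ)..r, s * f' s) (Set.Icc (0:ℝ) t) := by
      have := intervalIntegral.continuousOn_primitive_interval' hint2 Set.left_mem_uIcc
      rwa [Set.uIcc_of_le ht.le] at this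
    have c4 : ContinuousOn (fun r : ℝ => r^3/6 - c*r) (Set.Icc (0:ℝ) t) :=
      ((((continuous_pow 3).div_const 6).sub (continuous_const.mul continuous_id)).continuousOn)
    have : ContinuousOn (fun r => r^2 * m r - r^2 * f' r +
        2 * (∫ s in (0:ℝ)..r, s * f' s) + (r^3/6 - c*r)) (Set.Icc 0 t) :=
      ((c1.sub c2).add (c3.const_smul (2:ℝ))).add c4
    convert this using 1
    funext r; simp [hφdef]; ring
  -- antitone
  have hanti : AntitoneOn φ (Set.Icc 0 t) := by
    apply antitoneOn_of_deriv_nonpos (convex_Icc 0 t) hcont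
    · intro x hx
      rw [interior_Icc] at hx
      exact (hDeriv x hx).differentiableAt.differentiableWithinAt
    · intro x hx
      rw [interior_Icc] at hx
      exact hd0 x hx
  have hφ0 : φ 0 = 0 := by simp [hφdef]
  have hφt : φ t ≤ 0 := by
    have := hanti (Set.left_mem_Icc.2 ht.le) (Set.right_mem_Icc.2 ht.le) ht.le
    rwa [hφ0] at this
  simp only [hφdef] at hφt
  set I : ℝ := ∫ s in (0:ℝ)..t, s * f' s with hI
  have ht2 : (0:ℝ) < t^2 := by positivity
  have hEq : c/t - t/6 - 2/t^2 * I = (c*t - t^3/6 - 2*I)/t^2 := by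
    field_simp
  rw [hEq, le_div_iff₀ ht2]
  nlinarith [hφt]
end

section
/- Let $n \ge 2$ be an integer, $b \ge 0$, and $t \ge b + 4n - \tfrac{4}{3}$ where $b = 2\sqrt{f(p)}$. Suppose a function $F: [0,\infty) \to \mathbb{R}$ satisfies $\frac{1}{4}\big[(s - b - 4n + \tfrac{4}{3})_+\big]^2 \le F(s) \le \frac{1}{4}(s + b)^2$ for all $s \ge 0$. Then $\frac{n-1}{t} - \frac{t}{6} - \frac{2}{t}F(t) + \frac{2}{t^2}\int_0^t F(s)\, ds \le -\frac{t}{2} + \tfrac{3}{2}b + 4n - \tfrac{4}{3}$. -/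
open MeasureTheory

/-- Analytic estimate in the weighted Laplacian comparison on shrinkers: if
`¼[(s - b - 4n + 4/3)₊]² ≤ F(s) ≤ ¼(s+b)²` for all `s ≥ 0` and
`t ≥ b + 4n - 4/3`, then
`(n-1)/t - t/6 - (2/t)F(t) + (2/t²)∫₀ᵗ F ≤ -t/2 + (3/2)b + 4n - 4/3`. -/
theorem stmt4 (n : ℕ) (hn : 2 ≤ n) (b : ℝ) (hb : 0 ≤ b) (t : ℝ)
    (ht : b + 4 * n - 4/3 ≤ t)
    (F : ℝ → ℝ) (hint : IntervalIntegrable F volume 0 t)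
    (hlow : ∀ s ≥ (0:ℝ), (max (s - b - 4 * n + 4/3) 0) ^ 2 / 4 ≤ F s)
    (hup : ∀ s ≥ (0:ℝ), F s ≤ (s + b) ^ 2 / 4) :
    ((n : ℝ) - 1) / t - t / 6 - 2 / t * F t + 2 / t ^ 2 * ∫ s in (0:ℝ)..t, F s ≤
      -t / 2 + 3/2 * b + 4 * n - 4/3 := by
  have hn' : (2:ℝ) ≤ (n:ℝ) := by exact_mod_cast hn
  have ht0 : 0 < t := by nlinarith
  have hFt : (t - b - 4 * n + 4/3) ^ 2 / 4 ≤ F t := by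
    have h := hlow t ht0.le
    have hmax : max (t - b - 4 * n + 4/3) 0 = t - b - 4 * n + 4/3 :=
      max_eq_left (by linarith)
    rwa [hmax] at h
  have hcont : Continuous fun s : ℝ => (s + b) ^ 2 / 4 := by continuity
  have hI : (∫ s in (0:ℝ)..t, F s) ≤ ((t + b) ^ 3 - b ^ 3) / 12 := by
    have h1 : (∫ s in (0:ℝ)..t, (s + b) ^ 2 / 4) = ((t + b) ^ 3 - b ^ 3) / 12 := by
      have hd : ∀ s ∈ Set.uIcc (0:ℝ) t,
          HasDerivAt (fun x : ℝ => (x + b) ^ 3 / 12) ((s + b) ^ 2 / 4) s := by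
        intro s _
        have h := (((hasDerivAt_id s).add_const b).fun_pow 3).div_const 12
        refine h.congr_deriv ?_
        simp
        ring
      rw [intervalIntegral.integral_eq_sub_of_hasDerivAt hd
        (hcont.intervalIntegrable 0 t)]
      ring
    calc (∫ s in (0:ℝ)..t, F s) ≤ ∫ s in (0:ℝ)..t, (s + b) ^ 2 / 4 :=
          intervalIntegral.integral_mono_on ht0.le hint
            (hcont.intervalIntegrable 0 t) (fun s hs => hup s hs.1)
      _ = ((t + b) ^ 3 - b ^ 3) / 12 := h1
  have h2 : 2 / t * ((t - b - 4 * n + 4/3) ^ 2 / 4) ≤ 2 / t * F t :=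
    mul_le_mul_of_nonneg_left hFt (by positivity)
  have h3 : 2 / t ^ 2 * (∫ s in (0:ℝ)..t, F s) ≤ 2 / t ^ 2 * (((t + b) ^ 3 - b ^ 3) / 12) :=
    mul_le_mul_of_nonneg_left hI (by positivity)
  have hpoly : ((n : ℝ) - 1) / t - t / 6 - 2 / t * ((t - b - 4 * n + 4/3) ^ 2 / 4)
      + 2 / t ^ 2 * (((t + b) ^ 3 - b ^ 3) / 12) ≤ -t / 2 + 3/2 * b + 4 * n - 4/3 := by
    have heq : ((n : ℝ) - 1) / t - t / 6 - 2 / t * ((t - b - 4 * n + 4/3) ^ 2 / 4)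
        + 2 / t ^ 2 * (((t + b) ^ 3 - b ^ 3) / 12)
        = (((n : ℝ) - 1) * t - t ^ 3 / 6 - t * (t - b - 4 * n + 4/3) ^ 2 / 2
            + ((t + b) ^ 3 - b ^ 3) / 6) / t ^ 2 := by
      field_simp
      ring
    rw [heq, div_le_iff₀ (by positivity)]
    nlinarith [mul_nonneg (mul_nonneg ht0.le hb) (by linarith : (0:ℝ) ≤ (n:ℝ)),
      mul_nonneg ht0.le hb, mul_nonneg ht0.le (mul_nonneg hb hb),
      mul_le_mul_of_nonneg_left hn' ht0.le, sq_nonneg ((n:ℝ) - 2),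
      mul_nonneg ht0.le (sq_nonneg ((n:ℝ) - 2)), mul_pos ht0 ht0]
  linarith
end
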